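/- Let x₀, y₀ ∈ ℝ, let g : [x₀,∞) × [y₀,∞) → ℝ and K : [x₀,∞) × [y₀,∞) × [x₀,∞) × [y₀,∞) × ℝ → ℝ be continuous, and let q, r : [x₀,∞) × [y₀,∞) → [0,∞) be continuous such that |K(x,y,η,τ,u) − K(x,y,η,τ,v)| ≤ q(x,y) r(η,τ) |u − v| for all arguments and all u, v ∈ ℝ. If continuous functions u₁, u₂ : [x₀,∞) × [y₀,∞) → ℝ both satisfy u_i(x,y) = g(x,y) + ∫_{x₀}^{x} ∫_{x₀}^{s} ∫_{y₀}^{y} K(x,y,η,τ,u_i(η,τ)) dτ dη ds for all x ≥ x₀ and y ≥ y₀, then u₁ = u₂, i.e., the integral equation has at most one continuous solution. -/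

import Mathlib

/-- Continuous (𝕋₁ = 𝕋₂ = ℝ) uniqueness remark after Theorem 3.2: the integral
equation u(x,y) = g(x,y) + ∫∫∫ K(x,y,η,τ,u(η,τ)) with a Lipschitz-type kernel
has at most one continuous solution on [x₀,∞) × [y₀,∞). -/
theorem stmt_12 (x₀ y₀ : ℝ) (g : ℝ → ℝ → ℝ) (K : ℝ → ℝ → ℝ → ℝ → ℝ → ℝ)
    (q r : ℝ → ℝ → ℝ) (u₁ u₂ : ℝ → ℝ → ℝ)
    (hg_cont : ContinuousOn (fun z : ℝ × ℝ => g z.1 z.2) (Set.Ici x₀ ×ˢ Set.Ici y₀))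
    (hK_cont : ContinuousOn
      (fun z : ℝ × ℝ × ℝ × ℝ × ℝ => K z.1 z.2.1 z.2.2.1 z.2.2.2.1 z.2.2.2.2)
      (Set.Ici x₀ ×ˢ Set.Ici y₀ ×ˢ Set.Ici x₀ ×ˢ Set.Ici y₀ ×ˢ (Set.univ : Set ℝ)))
    (hq_cont : ContinuousOn (fun z : ℝ × ℝ => q z.1 z.2) (Set.Ici x₀ ×ˢ Set.Ici y₀))
    (hr_cont : ContinuousOn (fun z : ℝ × ℝ => r z.1 z.2) (Set.Ici x₀ ×ˢ Set.Ici y₀))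
    (hq_nonneg : ∀ x y, x₀ ≤ x → y₀ ≤ y → 0 ≤ q x y)
    (hr_nonneg : ∀ x y, x₀ ≤ x → y₀ ≤ y → 0 ≤ r x y)
    (hK_lip : ∀ x y η τ, x₀ ≤ x → y₀ ≤ y → x₀ ≤ η → y₀ ≤ τ → ∀ a b : ℝ,
      |K x y η τ a - K x y η τ b| ≤ q x y * r η τ * |a - b|)
    (hu₁_cont : ContinuousOn (fun z : ℝ × ℝ => u₁ z.1 z.2) (Set.Ici x₀ ×ˢ Set.Ici y₀))
    (hu₂_cont : ContinuousOn (fun z : ℝ × ℝ => u₂ z.1 z.2) (Set.Ici x₀ ×ˢ Set.Ici y₀))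
    (hu₁_sol : ∀ x y, x₀ ≤ x → y₀ ≤ y →
      u₁ x y = g x y + ∫ s in x₀..x, ∫ η in x₀..s, ∫ τ in y₀..y,
        K x y η τ (u₁ η τ))
    (hu₂_sol : ∀ x y, x₀ ≤ x → y₀ ≤ y →
      u₂ x y = g x y + ∫ s in x₀..x, ∫ η in x₀..s, ∫ τ in y₀..y,
        K x y η τ (u₂ η τ)) :
    ∀ x y, x₀ ≤ x → y₀ ≤ y → u₁ x y = u₂ x y := by
  intro X Y hX hY
  -- the compact rectangle
  set rect : Set (ℝ × ℝ) := Set.Icc x₀ X ×ˢ Set.Icc y₀ Y with hrectdef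
  have hsub : rect ⊆ Set.Ici x₀ ×ˢ Set.Ici y₀ :=
    Set.prod_mono Set.Icc_subset_Ici_self Set.Icc_subset_Ici_self
  have hcomp : IsCompact rect := isCompact_Icc.prod isCompact_Icc
  have hne : rect.Nonempty := ⟨(x₀, y₀), ⟨⟨le_refl _, hX⟩, ⟨le_refl _, hY⟩⟩⟩
  -- maximum of q on rect
  obtain ⟨pQ, hpQ_mem, hpQ⟩ := hcomp.exists_isMaxOn hne (hq_cont.mono hsub)
  set Q : ℝ := q pQ.1 pQ.2 with hQdef
  have hQ0 : 0 ≤ Q := hq_nonneg _ _ hpQ_mem.1.1 hpQ_mem.2.1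
  have hqQ : ∀ p : ℝ × ℝ, p ∈ rect → q p.1 p.2 ≤ Q := fun p hp => hpQ hp
  -- maximum of r on rect
  obtain ⟨pR, hpR_mem, hpR⟩ := hcomp.exists_isMaxOn hne (hr_cont.mono hsub)
  set R : ℝ := r pR.1 pR.2 with hRdef
  have hR0 : 0 ≤ R := hr_nonneg _ _ hpR_mem.1.1 hpR_mem.2.1
  have hrR : ∀ p : ℝ × ℝ, p ∈ rect → r p.1 p.2 ≤ R := fun p hp => hpR hp
  clear_value Q R
  -- the weight exponent
  have hQRY0 : 0 ≤ 2 * (Q * R * (Y - y₀)) :=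
    mul_nonneg (by norm_num) (mul_nonneg (mul_nonneg hQ0 hR0) (sub_nonneg.2 hY))
  set L : ℝ := 1 + Real.sqrt (2 * (Q * R * (Y - y₀))) with hLdef
  have hL1 : (1 : ℝ) ≤ L := le_add_of_nonneg_right (Real.sqrt_nonneg _)
  have hL0 : (0 : ℝ) < L := lt_of_lt_of_le one_pos hL1
  have hL2 : 2 * (Q * R * (Y - y₀)) ≤ L ^ 2 := by
    have h := Real.sq_sqrt hQRY0
    nlinarith [Real.sqrt_nonneg (2 * (Q * R * (Y - y₀)))]
  clear_value L
  -- the weighted difference and its maximum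
  set ψ : ℝ × ℝ → ℝ :=
    fun p => |u₁ p.1 p.2 - u₂ p.1 p.2| * Real.exp (-(L * (p.1 - x₀)))  with hψdef
  have hψc : ContinuousOn ψ rect :=
    (((hu₁_cont.mono hsub).sub (hu₂_cont.mono hsub)).abs).mul
      (Continuous.continuousOn (by fun_prop))
  obtain ⟨pM, hpM_mem, hpM⟩ := hcomp.exists_isMaxOn hne hψc
  set M : ℝ := ψ pM with hMdef
  have hM0 : 0 ≤ M := mul_nonneg (abs_nonneg _) (Real.exp_pos _).le
  have hψM : ∀ p : ℝ × ℝ, p ∈ rect → ψ p ≤ M := fun p hp => hpM hp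
  clear_value M
  -- pointwise bound extracted from ψ ≤ M
  have hdM : ∀ η τ : ℝ, (η, τ) ∈ rect →
      |u₁ η τ - u₂ η τ| ≤ M * Real.exp (L * (η - x₀)) := by
    intro η τ hmem
    have h1 : |u₁ η τ - u₂ η τ| * Real.exp (-(L * (η - x₀))) ≤ M := hψM (η, τ) hmem
    have h2 := mul_le_mul_of_nonneg_right h1 (Real.exp_pos (L * (η - x₀))).le
    rwa [mul_assoc, ← Real.exp_add, neg_add_cancel, Real.exp_zero, mul_one] at h2
  -- the exponential primitive computation
  have hLne : L ≠ 0 := ne_of_gt hL0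
  have hexp_int : ∀ s : ℝ,
      (∫ η in x₀..s, Real.exp (L * (η - x₀))) = (Real.exp (L * (s - x₀)) - 1) / L := by
    intro s
    have hder : ∀ t ∈ Set.uIcc x₀ s,
        HasDerivAt (fun η => Real.exp (L * (η - x₀)) / L) (Real.exp (L * (t - x₀))) t := by
      intro t _
      have h1 : HasDerivAt (fun η : ℝ => L * (η - x₀)) L t := by
        simpa using ((hasDerivAt_id t).sub_const x₀).const_mul L
      have h3 := h1.exp.div_const L
      simpa [mul_div_cancel_right₀ _ hLne] using h3
    rw [intervalIntegral.integral_eq_sub_of_hasDerivAt hder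
      ((Real.continuous_exp.comp (by fun_prop)).intervalIntegrable _ _)]
    rw [sub_self, mul_zero, Real.exp_zero]
    ring
  -- main bound on the rectangle
  have key : ∀ p : ℝ × ℝ, p ∈ rect →
      |u₁ p.1 p.2 - u₂ p.1 p.2| ≤
        Q * R * M * (p.2 - y₀) / L ^ 2 * Real.exp (L * (p.1 - x₀)) := by
    rintro ⟨x, y⟩ ⟨⟨hx0, hxX⟩, hy0, hyY⟩
    simp only
    set c : ℝ := Q * R * M * (y - y₀) with hcdef
    have hc0 : 0 ≤ c :=
      mul_nonneg (mul_nonneg (mul_nonneg hQ0 hR0) hM0) (sub_nonneg.2 hy0)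
    clear_value c
    -- clamped kernels
    set K₁ : ℝ → ℝ → ℝ :=
      fun η τ => K x y (max η x₀) (max τ y₀) (u₁ (max η x₀) (max τ y₀)) with hK₁def
    set K₂ : ℝ → ℝ → ℝ :=
      fun η τ => K x y (max η x₀) (max τ y₀) (u₂ (max η x₀) (max τ y₀)) with hK₂def
    have hclamp : ∀ z : ℝ × ℝ, (max z.1 x₀, max z.2 y₀) ∈ Set.Ici x₀ ×ˢ Set.Ici y₀ :=
      fun z => ⟨Set.mem_Ici.2 (le_max_right _ _), Set.mem_Ici.2 (le_max_right _ _)⟩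
    have hv₁ : Continuous (fun z : ℝ × ℝ => u₁ (max z.1 x₀) (max z.2 y₀)) :=
      hu₁_cont.comp_continuous (by fun_prop) hclamp
    have hv₂ : Continuous (fun z : ℝ × ℝ => u₂ (max z.1 x₀) (max z.2 y₀)) :=
      hu₂_cont.comp_continuous (by fun_prop) hclamp
    have hK₁c : Continuous (Function.uncurry K₁) := by
      apply hK_cont.comp_continuous
        (f := fun z : ℝ × ℝ =>
          (x, y, max z.1 x₀, max z.2 y₀, u₁ (max z.1 x₀) (max z.2 y₀)))
      · exact continuous_const.prodMk (continuous_const.prodMk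
          ((continuous_fst.max continuous_const).prodMk
            ((continuous_snd.max continuous_const).prodMk hv₁)))
      · intro z
        exact ⟨hx0, hy0, Set.mem_Ici.2 (le_max_right _ _), Set.mem_Ici.2 (le_max_right _ _), trivial⟩
    have hK₂c : Continuous (Function.uncurry K₂) := by
      apply hK_cont.comp_continuous
        (f := fun z : ℝ × ℝ =>
          (x, y, max z.1 x₀, max z.2 y₀, u₂ (max z.1 x₀) (max z.2 y₀)))
      · exact continuous_const.prodMk (continuous_const.prodMk
          ((continuous_fst.max continuous_const).prodMk
            ((continuous_snd.max continuous_const).prodMk hv₂)))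
      · intro z
        exact ⟨hx0, hy0, Set.mem_Ici.2 (le_max_right _ _), Set.mem_Ici.2 (le_max_right _ _), trivial⟩
    -- inner integrals
    set G₁ : ℝ → ℝ := fun η => ∫ τ in y₀..y, K₁ η τ with hG₁def
    set G₂ : ℝ → ℝ := fun η => ∫ τ in y₀..y, K₂ η τ with hG₂def
    set F₁ : ℝ → ℝ := fun s => ∫ η in x₀..s, G₁ η with hF₁def
    set F₂ : ℝ → ℝ := fun s => ∫ η in x₀..s, G₂ η with hF₂def
    have hG₁c : Continuous G₁ :=
      intervalIntegral.continuous_parametric_intervalIntegral_of_continuous' hK₁c y₀ y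
    have hG₂c : Continuous G₂ :=
      intervalIntegral.continuous_parametric_intervalIntegral_of_continuous' hK₂c y₀ y
    have hF₁c : Continuous F₁ :=
      intervalIntegral.continuous_parametric_intervalIntegral_of_continuous
        (f := fun (_ : ℝ) t => G₁ t) (hG₁c.comp continuous_snd) continuous_id
    have hF₂c : Continuous F₂ :=
      intervalIntegral.continuous_parametric_intervalIntegral_of_continuous
        (f := fun (_ : ℝ) t => G₂ t) (hG₂c.comp continuous_snd) continuous_id
    -- rewrite the triple integrals with the clamped kernels
    have hT₁ : (∫ s in x₀..x, ∫ η in x₀..s, ∫ τ in y₀..y, K x y η τ (u₁ η τ))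
        = ∫ s in x₀..x, F₁ s := by
      apply intervalIntegral.integral_congr
      intro s hs
      rw [Set.uIcc_of_le hx0] at hs
      apply intervalIntegral.integral_congr
      intro η hη
      rw [Set.uIcc_of_le hs.1] at hη
      apply intervalIntegral.integral_congr
      intro τ hτ
      rw [Set.uIcc_of_le hy0] at hτ
      simp only [hK₁def, max_eq_left hη.1, max_eq_left hτ.1]
    have hT₂ : (∫ s in x₀..x, ∫ η in x₀..s, ∫ τ in y₀..y, K x y η τ (u₂ η τ))
        = ∫ s in x₀..x, F₂ s := by
      apply intervalIntegral.integral_congr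
      intro s hs
      rw [Set.uIcc_of_le hx0] at hs
      apply intervalIntegral.integral_congr
      intro η hη
      rw [Set.uIcc_of_le hs.1] at hη
      apply intervalIntegral.integral_congr
      intro τ hτ
      rw [Set.uIcc_of_le hy0] at hτ
      simp only [hK₂def, max_eq_left hη.1, max_eq_left hτ.1]
    -- Step 1: bound the innermost difference
    have hGbound : ∀ η, x₀ ≤ η → η ≤ x →
        |G₁ η - G₂ η| ≤ Q * R * (M * Real.exp (L * (η - x₀))) * (y - y₀) := by
      intro η hη1 hη2
      have hsubint : G₁ η - G₂ η = ∫ τ in y₀..y, (K₁ η τ - K₂ η τ) :=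
        (intervalIntegral.integral_sub
          ((hK₁c.comp (continuous_const.prodMk continuous_id)).intervalIntegrable _ _)
          ((hK₂c.comp (continuous_const.prodMk continuous_id)).intervalIntegrable _ _)).symm
      rw [hsubint]
      have hb := intervalIntegral.norm_integral_le_of_norm_le_const
        (C := Q * R * (M * Real.exp (L * (η - x₀))))
        (f := fun τ => K₁ η τ - K₂ η τ) (a := y₀) (b := y) ?_
      · rw [Real.norm_eq_abs] at hb
        rwa [abs_of_nonneg (sub_nonneg.2 hy0)] at hb
      · intro τ hτ
        rw [Set.uIoc_of_le hy0] at hτ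
        have hτ1 : y₀ ≤ τ := le_of_lt hτ.1
        have hτ2 : τ ≤ y := hτ.2
        have hmem : (η, τ) ∈ rect := ⟨⟨hη1, hη2.trans hxX⟩, hτ1, hτ2.trans hyY⟩
        simp only [hK₁def, hK₂def, Real.norm_eq_abs, max_eq_left hη1, max_eq_left hτ1]
        calc |K x y η τ (u₁ η τ) - K x y η τ (u₂ η τ)|
            ≤ q x y * r η τ * |u₁ η τ - u₂ η τ| :=
              hK_lip x y η τ (hx0) (hy0) hη1 hτ1 _ _
          _ ≤ Q * R * (M * Real.exp (L * (η - x₀))) := by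
              apply mul_le_mul
              · exact mul_le_mul (hqQ (x, y) ⟨⟨hx0, hxX⟩, hy0, hyY⟩)
                  (hrR (η, τ) hmem) (hr_nonneg _ _ hη1 hτ1) hQ0
              · exact hdM η τ hmem
              · exact abs_nonneg _
              · exact mul_nonneg hQ0 hR0
    -- Step 2: bound the middle difference
    have hFbound : ∀ s, x₀ ≤ s → s ≤ x →
        |F₁ s - F₂ s| ≤ c / L * Real.exp (L * (s - x₀)) := by
      intro s hs1 hs2
      have hsubint : F₁ s - F₂ s = ∫ η in x₀..s, (G₁ η - G₂ η) :=
        (intervalIntegral.integral_sub (hG₁c.intervalIntegrable _ _)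
          (hG₂c.intervalIntegrable _ _)).symm
      rw [hsubint]
      have hb := intervalIntegral.norm_integral_le_of_norm_le
        (f := fun η => G₁ η - G₂ η)
        (g := fun η => c * Real.exp (L * (η - x₀))) (a := x₀) (b := s) (μ := MeasureTheory.volume)
        hs1 ?_ ?_
      · have hval : (∫ η in x₀..s, c * Real.exp (L * (η - x₀)))
            = c * ((Real.exp (L * (s - x₀)) - 1) / L) := by
          rw [intervalIntegral.integral_const_mul, hexp_int]
        rw [hval] at hb
        have hes : (1 : ℝ) ≤ Real.exp (L * (s - x₀)) :=
          Real.one_le_exp (mul_nonneg hL0.le (sub_nonneg.2 hs1))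
        have hnn : 0 ≤ c * ((Real.exp (L * (s - x₀)) - 1) / L) :=
          mul_nonneg hc0 (div_nonneg (sub_nonneg.2 hes) hL0.le)
        rw [Real.norm_eq_abs] at hb
        calc |∫ η in x₀..s, (G₁ η - G₂ η)|
            ≤ c * ((Real.exp (L * (s - x₀)) - 1) / L) := hb
          _ ≤ c * (Real.exp (L * (s - x₀)) / L) := by
              apply mul_le_mul_of_nonneg_left _ hc0
              exact (div_le_div_iff_of_pos_right hL0).2 (by linarith)
          _ = c / L * Real.exp (L * (s - x₀)) := by ring
      · apply Filter.Eventually.of_forall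
        intro t ht
        rw [Real.norm_eq_abs]
        calc |G₁ t - G₂ t|
            ≤ Q * R * (M * Real.exp (L * (t - x₀))) * (y - y₀) :=
              hGbound t ht.1.le (ht.2.trans hs2)
          _ = c * Real.exp (L * (t - x₀)) := by rw [hcdef]; ring
      · exact (Continuous.intervalIntegrable (by fun_prop) _ _)
    -- Step 3: conclude the bound at (x, y)
    have hdiff : u₁ x y - u₂ x y = ∫ s in x₀..x, (F₁ s - F₂ s) := by
      rw [hu₁_sol x y hx0 hy0, hu₂_sol x y hx0 hy0, hT₁, hT₂,
        intervalIntegral.integral_sub (hF₁c.intervalIntegrable _ _)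
          (hF₂c.intervalIntegrable _ _)]
      ring
    rw [hdiff]
    have hb := intervalIntegral.norm_integral_le_of_norm_le
      (f := fun s => F₁ s - F₂ s)
      (g := fun s => c / L * Real.exp (L * (s - x₀))) (a := x₀) (b := x)
      (μ := MeasureTheory.volume) hx0 ?_ ?_
    · have hval : (∫ s in x₀..x, c / L * Real.exp (L * (s - x₀)))
          = c / L * ((Real.exp (L * (x - x₀)) - 1) / L) := by
        rw [intervalIntegral.integral_const_mul, hexp_int]
      rw [hval] at hb
      have hex : (1 : ℝ) ≤ Real.exp (L * (x - x₀)) :=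
        Real.one_le_exp (mul_nonneg hL0.le (sub_nonneg.2 hx0))
      have hnn : 0 ≤ c / L * ((Real.exp (L * (x - x₀)) - 1) / L) :=
        mul_nonneg (div_nonneg hc0 hL0.le) (div_nonneg (sub_nonneg.2 hex) hL0.le)
      rw [Real.norm_eq_abs] at hb
      calc |∫ s in x₀..x, (F₁ s - F₂ s)|
          ≤ c / L * ((Real.exp (L * (x - x₀)) - 1) / L) := hb
        _ ≤ c / L * (Real.exp (L * (x - x₀)) / L) := by
            apply mul_le_mul_of_nonneg_left _ (div_nonneg hc0 hL0.le)
            exact (div_le_div_iff_of_pos_right hL0).2 (by linarith)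
        _ = c / L ^ 2 * Real.exp (L * (x - x₀)) := by ring
    · apply Filter.Eventually.of_forall
      intro t ht
      rw [Real.norm_eq_abs]
      exact hFbound t ht.1.le ht.2
    · exact (Continuous.intervalIntegrable (by fun_prop) _ _)
  -- conclude M = 0
  have hMle : M ≤ M / 2 := by
    have hk := key pM hpM_mem
    have h1 : ψ pM ≤ Q * R * M * (pM.2 - y₀) / L ^ 2 *
        (Real.exp (L * (pM.1 - x₀)) * Real.exp (-(L * (pM.1 - x₀)))) := by
      rw [hψdef]
      simp only
      rw [← mul_assoc]
      exact mul_le_mul_of_nonneg_right hk (Real.exp_pos _).le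
    rw [← Real.exp_add, add_neg_cancel, Real.exp_zero, mul_one] at h1
    have hL2pos : (0 : ℝ) < L ^ 2 := by positivity
    have h2 : Q * R * M * (pM.2 - y₀) / L ^ 2 ≤ Q * R * M * (Y - y₀) / L ^ 2 := by
      apply (div_le_div_iff_of_pos_right hL2pos).2
      exact mul_le_mul_of_nonneg_left (sub_le_sub_right hpM_mem.2.2 y₀)
        (mul_nonneg (mul_nonneg hQ0 hR0) hM0)
    have h3 : Q * R * M * (Y - y₀) / L ^ 2 ≤ M / 2 := by
      rw [div_le_div_iff₀ hL2pos two_pos]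
      nlinarith [mul_le_mul_of_nonneg_left hL2 hM0]
    exact le_trans (le_trans (hMdef.le.trans h1) h2) h3
  have hMzero : M = 0 := le_antisymm (by linarith) hM0
  have hfin : ψ (X, Y) ≤ 0 := hMzero ▸ hψM (X, Y) ⟨⟨hX, le_refl _⟩, hY, le_refl _⟩
  have hnn : 0 ≤ ψ (X, Y) := mul_nonneg (abs_nonneg _) (Real.exp_pos _).le
  have : ψ (X, Y) = 0 := le_antisymm hfin hnn
  rw [hψdef] at this
  simp only at this
  rcases mul_eq_zero.1 this with h | h
  · exact sub_eq_zero.1 (abs_eq_zero.1 h)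
  · exact absurd h (Real.exp_ne_zero _)
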